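/- arXiv:1804.03265 — 2 statements merged into one kernel-verified Lean document; each statement's English description precedes it below -/
import Mathlib

section
/- Let η ≥ 1, r > 0, and let R : [t₁, t₂] → ℝ be continuously differentiable with R(t₁) ≤ r⁻², satisfying R'(u) ≤ η R(u)² whenever R(u) ≥ r⁻². If η(t₂ - t₁) < r², then R(u) ≤ 1/(r² - η(u - t₁)) for all u ∈ [t₁, t₂]. -/
open Set Filter Topology

/-- Strict-inequality comparison lemma. -/
lemma stmt_7_key (η r t₁ t₂ : ℝ) (hη : 0 < η) (hr : 0 < r) (ht : t₁ ≤ t₂)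
    (hsmall : η * (t₂ - t₁) < r^2)
    (R R' : ℝ → ℝ)
    (hderiv : ∀ u ∈ Set.Icc t₁ t₂, HasDerivAt R (R' u) u)
    (hinit : R t₁ ≤ (r^2)⁻¹)
    (hbound : ∀ u ∈ Set.Icc t₁ t₂, (r^2)⁻¹ ≤ R u → R' u < η * (R u)^2) :
    ∀ u ∈ Set.Icc t₁ t₂, R u ≤ (r^2 - η * (u - t₁))⁻¹ := by
  have hr2 : 0 < r ^ 2 := by positivity
  have hgpos : ∀ x ∈ Set.Icc t₁ t₂, 0 < r^2 - η * (x - t₁) := by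
    intro x hx
    have h1 : η * (x - t₁) ≤ η * (t₂ - t₁) :=
      mul_le_mul_of_nonneg_left (by linarith [hx.2]) hη.le
    linarith
  have hgle : ∀ x ∈ Set.Icc t₁ t₂, r^2 - η * (x - t₁) ≤ r^2 := by
    intro x hx
    have : 0 ≤ η * (x - t₁) := mul_nonneg hη.le (by linarith [hx.1])
    linarith
  have hg : ∀ x : ℝ, HasDerivAt (fun y => r^2 - η * (y - t₁)) (-η) x := by
    intro x
    simpa using (((hasDerivAt_id x).sub_const t₁).const_mul η).const_sub (r^2)
  have hBderiv : ∀ x ∈ Set.Icc t₁ t₂,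
      HasDerivAt (fun y => (r^2 - η * (y - t₁))⁻¹)
        (η / (r^2 - η * (x - t₁))^2) x := by
    intro x hx
    have := (hg x).inv (ne_of_gt (hgpos x hx))
    simp at this
    exact this
  have key := image_le_of_deriv_right_lt_deriv_boundary'
    (f := R) (f' := R') (a := t₁) (b := t₂)
    (B := fun y => (r^2 - η * (y - t₁))⁻¹)
    (B' := fun y => η / (r^2 - η * (y - t₁))^2)
    (fun x hx => ((hderiv x hx).continuousAt).continuousWithinAt)
    (fun x hx => ((hderiv x (Set.mem_Icc.mpr ⟨hx.1, hx.2.le⟩)).hasDerivWithinAt))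
    (by simpa using hinit)
    (fun x hx => ((hBderiv x hx).continuousAt).continuousWithinAt)
    (fun x hx => (hBderiv x (Set.mem_Icc.mpr ⟨hx.1, hx.2.le⟩)).hasDerivWithinAt)
    ?_
  · intro u hu; exact key hu
  · intro x hx heq
    have hxI : x ∈ Set.Icc t₁ t₂ := ⟨hx.1, hx.2.le⟩
    have hgx := hgpos x hxI
    have hBge : (r^2)⁻¹ ≤ (r^2 - η * (x - t₁))⁻¹ :=
      inv_anti₀ hgx (hgle x hxI)
    have hRge : (r^2)⁻¹ ≤ R x := by rw [heq]; exact hBge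
    have h1 : R' x < η * (R x)^2 := hbound x hxI hRge
    have h2 : η * (R x)^2 = η / (r^2 - η * (x - t₁))^2 := by
      rw [heq, div_eq_mul_inv, ← inv_pow]
    linarith [h1, h2.le]

theorem stmt_7 (η r t₁ t₂ : ℝ) (hη : 1 ≤ η) (hr : 0 < r) (ht : t₁ ≤ t₂)
    (hsmall : η * (t₂ - t₁) < r^2)
    (R R' : ℝ → ℝ)
    (hderiv : ∀ u ∈ Set.Icc t₁ t₂, HasDerivAt R (R' u) u)
    (hcont : ContinuousOn R' (Set.Icc t₁ t₂))
    (hinit : R t₁ ≤ r⁻¹^2)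
    (hbound : ∀ u ∈ Set.Icc t₁ t₂, r⁻¹^2 ≤ R u → R' u ≤ η * (R u)^2) :
    ∀ u ∈ Set.Icc t₁ t₂, R u ≤ 1 / (r^2 - η * (u - t₁)) := by
  have hr2 : 0 < r ^ 2 := by positivity
  have hinv : r⁻¹^2 = (r^2)⁻¹ := inv_pow r 2
  intro u hu
  have hd0 : 0 ≤ u - t₁ := by linarith [hu.1]
  have hdt : u - t₁ ≤ t₂ - t₁ := by linarith [hu.2]
  have hden : 0 < r^2 - η * (u - t₁) := by
    have : η * (u - t₁) ≤ η * (t₂ - t₁) := by nlinarith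
    linarith
  set ε₀ : ℝ := (r^2 - η * (t₂ - t₁)) / (t₂ - t₁ + 1) with hε₀def
  have hε₀ : 0 < ε₀ := div_pos (by linarith) (by linarith)
  have hε₀mul : ε₀ * (t₂ - t₁ + 1) = r^2 - η * (t₂ - t₁) :=
    div_mul_cancel₀ _ (by intro h; nlinarith : (t₂ - t₁ + 1) ≠ 0)
  have hεle : ∀ ε ∈ Set.Ioo (0:ℝ) ε₀, R u ≤ (r^2 - (η + ε) * (u - t₁))⁻¹ := by
    rintro ε ⟨hε1, hε2⟩
    refine stmt_7_key (η + ε) r t₁ t₂ (by linarith) hr ht ?_ R R' hderiv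
      (by rwa [hinv] at hinit) ?_ u hu
    · nlinarith [hε₀mul, mul_le_mul_of_nonneg_left (le_of_lt hε2) (le_of_lt hε1)]
    · intro v hv hRv
      have h1 : R' v ≤ η * (R v)^2 := hbound v hv (by rwa [hinv])
      have h2 : 0 < (R v)^2 := by
        have : 0 < R v := lt_of_lt_of_le (by positivity) hRv
        positivity
      nlinarith
  have htend : Tendsto (fun ε : ℝ => (r^2 - (η + ε) * (u - t₁))⁻¹) (𝓝[>] 0)
      (𝓝 ((r^2 - η * (u - t₁))⁻¹)) := by
    have hc : ContinuousAt (fun ε : ℝ => (r^2 - (η + ε) * (u - t₁))⁻¹) 0 := by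
      apply ContinuousAt.inv₀
      · fun_prop
      · simpa using hden.ne'
    have := hc.tendsto.mono_left (nhdsWithin_le_nhds (s := Set.Ioi (0:ℝ)))
    simpa using this
  have hev : ∀ᶠ ε in 𝓝[>] (0:ℝ), R u ≤ (r^2 - (η + ε) * (u - t₁))⁻¹ := by
    filter_upwards [Ioo_mem_nhdsGT hε₀] with ε hε
    exact hεle ε hε
  have := ge_of_tendsto htend hev
  rw [one_div]
  exact this
end

section
/- Let η ≥ 1, r > 0, t₁ < t₂ with η(t₂-t₁) < r², and let R : [t₁, t₂] → ℝ be continuously differentiable with r⁻² < R(t₁), satisfying R'(u) ≤ η R(u)² whenever R(u) ≥ r⁻². If R(t₁)·η·(t₂-t₁) < 1, then R(u) ≤ 1/(1/R(t₁) - η(u - t₁)) for all u ∈ [t₁, t₂]. -/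
open Set

theorem stmt_8 (η r t₁ t₂ : ℝ) (hη : 1 ≤ η) (hr : 0 < r) (ht : t₁ < t₂)
    (hsmall : η * (t₂ - t₁) < r^2)
    (R R' : ℝ → ℝ)
    (hderiv : ∀ u ∈ Set.Icc t₁ t₂, HasDerivAt R (R' u) u)
    (hcont : ContinuousOn R' (Set.Icc t₁ t₂))
    (hinit : r⁻¹^2 < R t₁)
    (hbound : ∀ u ∈ Set.Icc t₁ t₂, r⁻¹^2 ≤ R u → R' u ≤ η * (R u)^2)
    (hsmall' : R t₁ * η * (t₂ - t₁) < 1) :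
    ∀ u ∈ Set.Icc t₁ t₂, R u ≤ 1 / (1 / R t₁ - η * (u - t₁)) := by
  have hrinv : (0:ℝ) < r⁻¹^2 := by positivity
  have hR0 : (0:ℝ) < R t₁ := hrinv.trans hinit
  set c := 1 / R t₁ with hc
  have hc0 : 0 < c := by positivity
  have hdt : 0 < t₂ - t₁ := sub_pos.2 ht
  -- key: for any k with η < k and R t₁ * k * (t₂ - t₁) < 1, barrier holds
  have key : ∀ k : ℝ, η < k → R t₁ * k * (t₂ - t₁) < 1 →
      ∀ u ∈ Set.Icc t₁ t₂, R u ≤ (c - k * (u - t₁))⁻¹ := by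
    intro k hk hk2 u hu
    have hk0 : 0 < k := lt_of_lt_of_le (by linarith) hk.le
    have hden : ∀ x ∈ Icc t₁ t₂, 0 < c - k * (x - t₁) := by
      intro x hx
      have h1 : k * (x - t₁) ≤ k * (t₂ - t₁) :=
        mul_le_mul_of_nonneg_left (by linarith [hx.2]) hk0.le
      have h2 : k * (t₂ - t₁) < c := by
        rw [hc, lt_div_iff₀ hR0]; nlinarith
      linarith
    have hBderiv : ∀ x ∈ Icc t₁ t₂,
        HasDerivAt (fun x => (c - k * (x - t₁))⁻¹) (k * (c - k * (x - t₁))⁻¹^2) x := by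
      intro x hx
      have h1 : HasDerivAt (fun x => c - k * (x - t₁)) (-k) x := by
        simpa using ((hasDerivAt_id x).sub_const t₁).const_mul k |>.const_sub c
      have := h1.inv (ne_of_gt (hden x hx))
      rw [neg_neg, div_eq_mul_inv, ← inv_pow] at this
      exact this
    -- apply the fencing theorem
    have main := image_le_of_deriv_right_lt_deriv_boundary'
      (f := R) (f' := R') (a := t₁) (b := t₂)
      (fun x hx => (hderiv x hx).continuousAt.continuousWithinAt)
      (fun x hx => (hderiv x (Ico_subset_Icc_self hx)).hasDerivWithinAt)
      (B := fun x => (c - k * (x - t₁))⁻¹) (B' := fun x => k * (c - k * (x - t₁))⁻¹^2)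
      (by simp [hc, hR0.ne'])
      (fun x hx => (hBderiv x hx).continuousAt.continuousWithinAt)
      (fun x hx => (hBderiv x (Ico_subset_Icc_self hx)).hasDerivWithinAt)
      ?_ hu
    · exact main
    · intro x hx hRx
      have hx' := Ico_subset_Icc_self hx
      have hdx := hden x hx'
      have hBge : R t₁ ≤ (c - k * (x - t₁))⁻¹ := by
        rw [hc]
        have h1 : c - k * (x - t₁) ≤ c := by nlinarith [hx.1, hk0]
        calc R t₁ = (1 / R t₁)⁻¹ := by field_simp
          _ ≤ (c - k * (x - t₁))⁻¹ := by
              apply inv_anti₀ hdx h1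
      have hRxge : r⁻¹^2 ≤ R x := by rw [hRx]; exact le_trans hinit.le hBge
      have h1 := hbound x hx' hRxge
      have hRpos : 0 < R x := lt_of_lt_of_le hrinv hRxge
      calc R' x ≤ η * (R x)^2 := h1
        _ < k * (R x)^2 := mul_lt_mul_of_pos_right hk (pow_pos hRpos 2)
        _ = k * (c - k * (x - t₁))⁻¹^2 := by rw [hRx]
  -- now take the limit k → η⁺
  intro u hu
  have hden0 : 0 < c - η * (u - t₁) := by
    have h1 : η * (u - t₁) ≤ η * (t₂ - t₁) :=
      mul_le_mul_of_nonneg_left (by linarith [hu.2]) (by linarith)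
    have h2 : η * (t₂ - t₁) < c := by
      rw [hc, lt_div_iff₀ hR0]; nlinarith
    linarith
  rw [one_div]
  have htend : Filter.Tendsto (fun k => (c - k * (u - t₁))⁻¹) (nhdsWithin η (Ioi η))
      (nhds ((c - η * (u - t₁))⁻¹)) := by
    apply Filter.Tendsto.mono_left _ nhdsWithin_le_nhds
    exact ((continuous_const.sub (continuous_id.mul continuous_const)).continuousAt.inv₀
      hden0.ne')
  refine ge_of_tendsto htend ?_
  have hev : ∀ᶠ k in nhds η, R t₁ * k * (t₂ - t₁) < 1 := by
    have hcontk : ContinuousAt (fun k => R t₁ * k * (t₂ - t₁)) η := by fun_prop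
    exact hcontk.eventually_lt_const hsmall'
  filter_upwards [self_mem_nhdsWithin, hev.filter_mono nhdsWithin_le_nhds] with k hk1 hk2
  exact key k hk1 hk2 u hu
end
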